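/- Let n = 2m and for each admissible set S let m_S denote the multilinear monomial equal to the partial derivative of IMM_{n,n} with respect to S. Then the set of monomials { ∂IMM_{n,n}/∂(S ∪ T) : S admissible, T ⊆ var(m_S) } is a downward-closed set of multilinear monomials: if m belongs to this set and m′ is a multilinear monomial with var(m′) ⊆ var(m), then m′ also belongs to this set. -/

import Mathlib

open MvPolynomial

noncomputable section

/-- The iterated matrix multiplication polynomial `IMM_{n,n}`. -/
def IMM (n : ℕ) (K : Type*) [CommSemiring K] : MvPolynomial (Fin n × Fin n × Fin n) K :=
  if h : 0 < n then
    (((List.finRange n).map fun k =>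
      Matrix.of fun i j => (X (k, i, j) : MvPolynomial (Fin n × Fin n × Fin n) K)).prod)
      ⟨0, h⟩ ⟨0, h⟩
  else 0

/-- Iterated partial derivative with respect to a finite set of variables. -/
def pderivFinset {σ : Type*} {K : Type*} [CommSemiring K] (D : Finset σ)
    (f : MvPolynomial σ K) : MvPolynomial σ K :=
  D.toList.foldr (fun v g => pderiv v g) f

/-- A set `S` of variables of `IMM_{n,n}` is admissible if it consists of exactly one
variable from the first row of the first matrix and exactly one variable from each of
the other odd-indexed (`1`-based, even `0`-based) matrices. -/
def IsAdmissible (n : ℕ) (S : Finset (Fin n × Fin n × Fin n)) : Prop :=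
  (∀ v ∈ S, Even v.1.val) ∧
  (∀ k : Fin n, Even k.val → (S.filter fun v => v.1 = k).card = 1) ∧
  (∀ v ∈ S, v.1.val = 0 → v.2.1.val = 0)

section AuxLemmas


variable {σ : Type*} {K : Type*} [CommSemiring K] [DecidableEq σ]

lemma pderiv_comm' (i j : σ) (f : MvPolynomial σ K) :
    pderiv i (pderiv j f) = pderiv j (pderiv i f) := by
  classical
  induction f using MvPolynomial.induction_on' with
  | monomial s a =>
    rcases eq_or_ne i j with rfl | hij
    · rfl
    · simp only [pderiv_monomial]
      rw [Finsupp.tsub_apply, Finsupp.tsub_apply,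
        Finsupp.single_eq_of_ne' hij, Finsupp.single_eq_of_ne' (Ne.symm hij),
        tsub_zero, tsub_zero, tsub_right_comm]
      ring_nf
  | add p q hp hq => simp [map_add, hp, hq]

instance pderivLeftComm : LeftCommutative (fun (v : σ) (g : MvPolynomial σ K) => pderiv v g) :=
  ⟨fun a b c => pderiv_comm' a b c⟩

/-- foldr of pderiv along a list. -/
def pderivList (l : List σ) (f : MvPolynomial σ K) : MvPolynomial σ K :=
  l.foldr (fun v g => pderiv v g) f

lemma pderivFinset_eq_list (D : Finset σ) (f : MvPolynomial σ K) :
    pderivFinset D f = pderivList D.toList f := rfl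

lemma pderivList_perm {l₁ l₂ : List σ} (h : l₁.Perm l₂) (f : MvPolynomial σ K) :
    pderivList l₁ f = pderivList l₂ f :=
  h.foldr_eq f

lemma pderivList_append (l₁ l₂ : List σ) (f : MvPolynomial σ K) :
    pderivList (l₁ ++ l₂) f = pderivList l₁ (pderivList l₂ f) :=
  List.foldr_append

lemma pderivList_zero (l : List σ) : pderivList l (0 : MvPolynomial σ K) = 0 := by
  induction l with
  | nil => rfl
  | cons a l ih => simp [pderivList, List.foldr_cons] at ih ⊢; rw [ih]; simp

lemma pderiv_prod_X_not_mem {W : Finset σ} {t : σ} (h : t ∉ W) :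
    pderiv t (∏ v ∈ W, (X v : MvPolynomial σ K)) = 0 := by
  classical
  induction W using Finset.induction_on with
  | empty => simp
  | @insert a s hnot ih =>
    rw [Finset.prod_insert hnot, pderiv_mul,
      ih (fun hc => h (Finset.mem_insert_of_mem hc)),
      pderiv_X_of_ne (fun hc => h (Finset.mem_insert.mpr (Or.inl hc.symm)))]
    simp

lemma pderiv_prod_X_mem {W : Finset σ} {t : σ} (h : t ∈ W) :
    pderiv t (∏ v ∈ W, (X v : MvPolynomial σ K)) = ∏ v ∈ W.erase t, (X v : MvPolynomial σ K) := by
  classical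
  rw [← Finset.prod_erase_mul _ _ h, pderiv_mul, pderiv_prod_X_not_mem (Finset.notMem_erase t W)]
  simp

lemma pderivList_prod_X (l : List σ) (hnd : l.Nodup) (W : Finset σ)
    (h : ∀ v ∈ l, v ∈ W) :
    pderivList l (∏ v ∈ W, (X v : MvPolynomial σ K)) = ∏ v ∈ W \ l.toFinset, (X v : MvPolynomial σ K) := by
  classical
  induction l with
  | nil => simp [pderivList]
  | cons a l ih =>
    have hnd' := hnd.of_cons
    have ha : a ∉ l := (List.nodup_cons.mp hnd).1
    have : pderivList (a :: l) (∏ v ∈ W, (X v : MvPolynomial σ K))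
        = pderiv a (pderivList l (∏ v ∈ W, (X v : MvPolynomial σ K))) := rfl
    rw [this, ih hnd' (fun v hv => h v (List.mem_cons_of_mem a hv))]
    have hmem : a ∈ W \ l.toFinset := by
      simp only [Finset.mem_sdiff, List.mem_toFinset]
      exact ⟨h a List.mem_cons_self, ha⟩
    rw [pderiv_prod_X_mem hmem]
    congr 1
    ext x
    simp only [Finset.mem_erase, Finset.mem_sdiff, List.mem_toFinset, List.toFinset_cons,
      Finset.mem_insert, List.mem_cons]
    tauto

lemma pderivFinset_prod_X {T W : Finset σ} (h : T ⊆ W) :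
    pderivFinset T (∏ v ∈ W, (X v : MvPolynomial σ K)) = ∏ v ∈ W \ T, (X v : MvPolynomial σ K) := by
  classical
  rw [pderivFinset_eq_list, pderivList_prod_X T.toList T.nodup_toList W
    (fun v hv => h (Finset.mem_toList.mp hv))]
  simp [Finset.toList_toFinset]

lemma prod_X_eq_monomial' (W : Finset σ) :
    (∏ v ∈ W, (X v : MvPolynomial σ K)) = monomial (∑ v ∈ W, Finsupp.single v 1) 1 := by
  classical
  induction W using Finset.induction_on with
  | empty => simp
  | @insert a s hnot ih =>
    rw [Finset.prod_insert hnot, Finset.sum_insert hnot, ih, X, monomial_mul, one_mul]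

lemma prod_X_ne_zero [Nontrivial K] (W : Finset σ) :
    (∏ v ∈ W, (X v : MvPolynomial σ K)) ≠ 0 := by
  rw [prod_X_eq_monomial']
  simp [monomial_eq_zero]

lemma prod_X_inj [Nontrivial K] {W W' : Finset σ}
    (h : (∏ v ∈ W, (X v : MvPolynomial σ K)) = ∏ v ∈ W', (X v : MvPolynomial σ K)) :
    W = W' := by
  classical
  rw [prod_X_eq_monomial', prod_X_eq_monomial'] at h
  have h2 : (∑ v ∈ W, Finsupp.single v (1:ℕ)) = ∑ v ∈ W', Finsupp.single v 1 := by
    by_contra hc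
    have := coeff_monomial (∑ v ∈ W, Finsupp.single v (1:ℕ)) (∑ v ∈ W', Finsupp.single v 1) (1:K)
    rw [← h, coeff_monomial, if_pos rfl, if_neg (fun hx => hc hx.symm)] at this
    exact one_ne_zero this
  ext w
  have := DFunLike.congr_fun h2 w
  simp only [Finsupp.finset_sum_apply, Finsupp.single_apply] at this
  rw [Finset.sum_ite_eq' W w (fun _ => 1), Finset.sum_ite_eq' W' w (fun _ => 1)] at this
  by_cases hw : w ∈ W <;> by_cases hw' : w ∈ W' <;> simp [hw, hw'] at this ⊢ <;> tauto

lemma pderiv_pderiv_self_eq_zero {v : σ} {f : MvPolynomial σ K}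
    (h : ∀ d ∈ f.support, d v ≤ 1) :
    pderiv v (pderiv v f) = 0 := by
  classical
  conv_lhs => rw [f.as_sum]
  rw [map_sum, map_sum]
  apply Finset.sum_eq_zero
  intro d hd
  rw [pderiv_monomial, pderiv_monomial]
  have hz : ((d - Finsupp.single v 1 : _ →₀ ℕ)) v = 0 := by
    have hdv := h d hd
    rw [Finsupp.tsub_apply, Finsupp.single_eq_same]
    omega
  rw [hz]
  simp

lemma pderivFinset_union {A B : Finset σ} (h : Disjoint A B) (f : MvPolynomial σ K) :
    pderivFinset (A ∪ B) f = pderivFinset B (pderivFinset A f) := by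
  classical
  have hperm : (A ∪ B).toList.Perm (B.toList ++ A.toList) := by
    rw [← Multiset.coe_eq_coe, ← Multiset.coe_add, Finset.coe_toList, Finset.coe_toList,
      Finset.coe_toList, ← Finset.disjUnion_eq_union A B h]
    exact add_comm A.val B.val
  rw [pderivFinset_eq_list, pderivList_perm hperm, pderivList_append]
  rfl

end AuxLemmas

section IMMSupport

lemma support_matrix_prod {n : ℕ} {K : Type*} [CommSemiring K] [Nontrivial K]
    (l : List (Fin n)) (hl : l.Nodup) (j : Fin n) :
    ∀ (i : Fin n) (d : (Fin n × Fin n × Fin n) →₀ ℕ),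
      d ∈ (((l.map fun k =>
        Matrix.of fun i j => (X (k, i, j) : MvPolynomial (Fin n × Fin n × Fin n) K)).prod)
          i j).support →
      ∀ v, d v ≤ 1 ∧ (v.1 ∉ l → d v = 0) := by
  classical
  induction l with
  | nil =>
    intro i d hd v
    simp only [List.map_nil, List.prod_nil, Matrix.one_apply] at hd
    by_cases hij : i = j
    · rw [if_pos hij] at hd
      have h1 : d ∈ (monomial 0 (1:K) : MvPolynomial (Fin n × Fin n × Fin n) K).support := by
        rw [monomial_zero']; simpa using hd
      rw [support_monomial, if_neg one_ne_zero] at h1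
      simp only [Finset.mem_singleton] at h1
      subst h1
      simp
    · rw [if_neg hij] at hd
      simp at hd
  | cons a l ih =>
    intro i d hd v
    rw [List.map_cons, List.prod_cons, Matrix.mul_apply] at hd
    obtain ⟨t, _, hdt⟩ := Finset.mem_biUnion.mp (support_sum hd)
    have hdt' := support_mul _ _ hdt
    rw [Matrix.of_apply, support_X] at hdt'
    obtain ⟨b, hb, e, he, hbe⟩ := Finset.mem_add.mp hdt'
    rw [Finset.mem_singleton] at hb
    subst hb
    have hdv : d v = Finsupp.single ((a, i, t) : Fin n × Fin n × Fin n) 1 v + e v := by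
      rw [← hbe]; simp
    have hIH := ih hl.of_cons t e he v
    have hanl : a ∉ l := (List.nodup_cons.mp hl).1
    by_cases hv : ((a, i, t) : Fin n × Fin n × Fin n) = v
    · have hv1 : v.1 = a := by rw [← hv]
      have he0 : e v = 0 := hIH.2 (by rw [hv1]; exact hanl)
      rw [Finsupp.single_apply, if_pos hv, he0] at hdv
      constructor
      · omega
      · intro hcon
        exact absurd (by rw [hv1]; exact List.mem_cons_self) hcon
    · rw [Finsupp.single_apply, if_neg hv, zero_add] at hdv
      refine ⟨hdv ▸ hIH.1, fun hcon => ?_⟩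
      rw [hdv]
      exact hIH.2 (fun hc => hcon (List.mem_cons_of_mem a hc))

end IMMSupport

/-- Downward closedness of the monomial set
`{∂IMM_{n,n}/∂(S ∪ T) : S admissible, T ⊆ var(m_S)}` for `n = 2m`: if
`m = ∂IMM/∂(S ∪ T)` is the multilinear monomial `∏_{v ∈ V} X v` for an admissible `S`
and `T ⊆ var(m_S)` (where `m_S = ∂IMM/∂S = ∏_{v ∈ V_S} X v`), then for any `V' ⊆ V` the
monomial `∏_{v ∈ V'} X v` is again of the form `∂IMM/∂(S' ∪ T')` with `S'` admissible
and `T' ⊆ var(m_{S'})`. -/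
theorem pderiv_IMM_downward_closed
    (m : ℕ) (hm : 0 < m) (K : Type*) [Field K] (n : ℕ) (hn : n = 2 * m)
    (S : Finset (Fin n × Fin n × Fin n)) (hS : IsAdmissible n S)
    (VS : Finset (Fin n × Fin n × Fin n))
    (hVS : pderivFinset S (IMM n K) = ∏ v ∈ VS, X v)
    (T : Finset (Fin n × Fin n × Fin n)) (hT : T ⊆ VS)
    (V : Finset (Fin n × Fin n × Fin n))
    (hV : pderivFinset (S ∪ T) (IMM n K) = ∏ v ∈ V, X v)
    (V' : Finset (Fin n × Fin n × Fin n)) (hV' : V' ⊆ V) :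
    ∃ (S' T' VS' : Finset (Fin n × Fin n × Fin n)),
      IsAdmissible n S' ∧
      pderivFinset S' (IMM n K) = ∏ v ∈ VS', X v ∧
      T' ⊆ VS' ∧
      pderivFinset (S' ∪ T') (IMM n K) = ∏ v ∈ V', X v := by
  classical
  classical
  have hn0 : 0 < n := by omega
  have hsupp : ∀ d ∈ (IMM n K).support, ∀ v, d v ≤ 1 := by
    intro d hd v
    rw [IMM, dif_pos hn0] at hd
    exact (support_matrix_prod (List.finRange n) (List.nodup_finRange n) _ _ d hd v).1
  have hml : ∀ v, pderiv v (pderiv v (IMM n K)) = 0 :=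
    fun v => pderiv_pderiv_self_eq_zero (fun d hd => hsupp d hd v)
  have hdisj : Disjoint S VS := by
    rw [Finset.disjoint_left]
    intro v hvS hvVS
    have hp1 : S.toList.Perm (v :: (S.erase v).toList) := by
      rw [← Multiset.coe_eq_coe, Finset.coe_toList, ← Multiset.cons_coe, Finset.coe_toList,
        Finset.erase_val, Multiset.cons_erase (Finset.mem_def.mp hvS)]
    have hp2 : (v :: S.toList).Perm ((S.erase v).toList ++ [v, v]) := by
      refine (hp1.cons v).trans ?_
      exact List.perm_append_comm (l₁ := [v, v]) (l₂ := (S.erase v).toList)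
    have hzero : pderivList (v :: S.toList) (IMM n K) = 0 := by
      rw [pderivList_perm hp2, pderivList_append]
      have h2 : pderivList [v, v] (IMM n K) = 0 := hml v
      rw [h2, pderivList_zero]
    have h0 : pderiv v (pderivFinset S (IMM n K)) = 0 := hzero
    rw [hVS, pderiv_prod_X_mem hvVS] at h0
    exact prod_X_ne_zero _ h0
  have hdisjT : Disjoint S T := hdisj.mono_right hT
  have hstep : pderivFinset (S ∪ T) (IMM n K) = ∏ v ∈ VS \ T, X v := by
    rw [pderivFinset_union hdisjT, hVS, pderivFinset_prod_X hT]
  have hVeq : V = VS \ T := prod_X_inj (hV.symm.trans hstep)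
  have hV'sub : V' ⊆ VS := fun x hx => (Finset.mem_sdiff.mp (hVeq ▸ hV' hx)).1
  refine ⟨S, VS \ V', VS, hS, hVS, Finset.sdiff_subset, ?_⟩
  have hdisjT' : Disjoint S (VS \ V') := hdisj.mono_right Finset.sdiff_subset
  rw [pderivFinset_union hdisjT', hVS, pderivFinset_prod_X Finset.sdiff_subset]
  congr 1
  ext x
  simp only [Finset.mem_sdiff]
  constructor
  · rintro ⟨hx, hx2⟩
    by_contra hc
    exact hx2 ⟨hx, hc⟩
  · intro hx
    exact ⟨hV'sub hx, fun h2 => h2.2 hx⟩
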